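/- Let σ ≥ 0, ϑ > 0, ν₀ ∈ (0,1), ν₁ = 1 − ν₀, and for n ∈ ℕ₀ define I(n) = ∫₀¹ x^{2ϑν₀−1}(1−x)^{n+2ϑν₁−1}e^{2σx} dx. Then for every n ≥ 1 the recursion (n − 1 + 2σ + 2ϑ)·I(n) = 2σ·I(n+1) + (n − 1 + 2ϑν₁)·I(n−1) holds. Equivalently, the normalised sequence b(n) = I(n)/I(0) satisfies b(n) = (2σ/(n−1+2σ+2ϑ))·b(n+1) + ((n−1+2ϑν₁)/(n−1+2σ+2ϑ))·b(n−1) with b(0) = 1. -/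

import Mathlib

open MeasureTheory Set intervalIntegral

noncomputable def WF (σ p q : ℝ) : ℝ → ℝ :=
  fun x => x ^ p * (1 - x) ^ q * Real.exp (2 * σ * x)

lemma wf_half (r s : ℝ) (hr : -1 < r) (h : ℝ → ℝ) (hh : Continuous h) :
    IntervalIntegrable (fun x => x ^ r * ((1 - x) ^ s * h x)) volume 0 (1/2) := by
  apply IntervalIntegrable.mul_continuousOn (intervalIntegrable_rpow' hr)
  apply ContinuousOn.mul ?_ hh.continuousOn
  apply ContinuousOn.rpow_const (continuous_const.sub continuous_id).continuousOn
  intro x hx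
  rw [uIcc_of_le (by norm_num : (0:ℝ) ≤ 1/2)] at hx
  refine Or.inl ?_
  intro h'
  simp only [Pi.sub_apply, id_eq] at h'
  have := sub_eq_zero.mp h'
  have := hx.2
  linarith

lemma wf_intervalIntegrable (σ p q : ℝ) (hp : -1 < p) (hq : -1 < q) :
    IntervalIntegrable (WF σ p q) volume 0 1 := by
  have hleft : IntervalIntegrable (WF σ p q) volume 0 (1/2) := by
    have h1 := wf_half p q hp (fun x => Real.exp (2 * σ * x))
      (Real.continuous_exp.comp (continuous_const.mul continuous_id))
    have : WF σ p q = fun x => x ^ p * ((1 - x) ^ q * Real.exp (2 * σ * x)) := by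
      funext x; simp [WF, mul_assoc]
    rw [this]; exact h1
  have hright : IntervalIntegrable (WF σ p q) volume (1/2) 1 := by
    have hg := wf_half q p hq (fun y => Real.exp (2 * σ * (1 - y)))
      (Real.continuous_exp.comp (continuous_const.mul (continuous_const.sub continuous_id)))
    have h2 := hg.comp_sub_left 1
    norm_num at h2
    have : WF σ p q = fun x => (1 - x) ^ q * (x ^ p * Real.exp (2 * σ * x)) := by
      funext x; simp [WF]; ring
    rw [this]; exact h2.symm
  exact hleft.trans hright

lemma wf_integrableOn (σ p q : ℝ) (hp : -1 < p) (hq : -1 < q) :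
    IntegrableOn (WF σ p q) (Ioo 0 1) volume :=
  (intervalIntegrable_iff_integrableOn_Ioo_of_le zero_le_one).mp
    (wf_intervalIntegrable σ p q hp hq)

lemma interval_eq_Ioo (f : ℝ → ℝ) :
    ∫ x in (0:ℝ)..1, f x = ∫ x in Ioo (0:ℝ) 1, f x := by
  rw [integral_of_le zero_le_one, integral_Ioc_eq_integral_Ioo]

lemma wf_ibp (σ p q : ℝ) (hp : -1 < p) (hq : 0 < q) :
    (p+1) * (∫ x in Ioo (0:ℝ) 1, WF σ p q x)
      + 2*σ * (∫ x in Ioo (0:ℝ) 1, WF σ (p+1) q x)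
      = q * (∫ x in Ioo (0:ℝ) 1, WF σ (p+1) (q-1) x) := by
  have hp1 : (0:ℝ) < p + 1 := by linarith
  set F : ℝ → ℝ := fun x => x ^ (p+1) * (1 - x) ^ q * Real.exp (2*σ*x) with hF
  set F' : ℝ → ℝ := fun x => (p+1) * WF σ p q x - q * WF σ (p+1) (q-1) x
      + 2*σ * WF σ (p+1) q x with hF'
  have hcont : ContinuousOn F (Icc 0 1) := by
    apply ContinuousOn.mul
    apply ContinuousOn.mul
    · exact continuous_id.continuousOn.rpow_const (fun x _ => Or.inr hp1.le)
    · exact (continuous_const.sub continuous_id).continuousOn.rpow_const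
        (fun x _ => Or.inr hq.le)
    · exact (Real.continuous_exp.comp (continuous_const.mul continuous_id)).continuousOn
  have hderiv : ∀ x ∈ Ioo (0:ℝ) 1, HasDerivWithinAt F (F' x) (Ioi x) x := by
    intro x hx
    apply HasDerivAt.hasDerivWithinAt
    have hx0 : x ≠ 0 := hx.1.ne'
    have hx1 : (1:ℝ) - x ≠ 0 := by have := hx.2; intro h; rw [sub_eq_zero] at h; linarith
    have h1 : HasDerivAt (fun y : ℝ => y ^ (p+1)) ((p+1) * x ^ p) x := by
      simpa using Real.hasDerivAt_rpow_const (p := p+1) (Or.inl hx0)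
    have h2 : HasDerivAt (fun y : ℝ => (1 - y) ^ q) (-1 * q * (1-x) ^ (q-1)) x := by
      have hb : HasDerivAt (fun y : ℝ => 1 - y) (-1) x := by
        simpa using (hasDerivAt_id x).const_sub 1
      exact hb.rpow_const (Or.inl hx1)
    have h3 : HasDerivAt (fun y : ℝ => Real.exp (2*σ*y)) (Real.exp (2*σ*x) * (2*σ)) x := by
      have : HasDerivAt (fun y : ℝ => 2*σ*y) (2*σ) x := by
        simpa using (hasDerivAt_id x).const_mul (2*σ)
      simpa [mul_comm] using this.exp
    have := (h1.mul h2).mul h3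
    convert this using 1
    case e'_8 => rfl
    case e'_4 => rfl
    simp only [F', WF, Pi.mul_apply]
    ring
  have hint : IntervalIntegrable F' volume 0 1 := by
    have i1 := (wf_intervalIntegrable σ p q hp (by linarith)).const_mul (p+1)
    have i2 := (wf_intervalIntegrable σ (p+1) (q-1) (by linarith) (by linarith)).const_mul q
    have i3 := (wf_intervalIntegrable σ (p+1) q (by linarith) (by linarith)).const_mul (2*σ)
    exact (i1.sub i2).add i3
  have hFTC := integral_eq_sub_of_hasDeriv_right_of_le zero_le_one hcont hderiv hint
  have hF1 : F 1 = 0 := by simp [hF, Real.zero_rpow hq.ne']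
  have hF0 : F 0 = 0 := by simp [hF, Real.zero_rpow hp1.ne']
  rw [hF1, hF0, sub_zero] at hFTC
  have hsplit : ∫ y in (0:ℝ)..1, F' y
      = (p+1) * (∫ x in (0:ℝ)..1, WF σ p q x)
        - q * (∫ x in (0:ℝ)..1, WF σ (p+1) (q-1) x)
        + 2*σ * (∫ x in (0:ℝ)..1, WF σ (p+1) q x) := by
    rw [hF']
    rw [intervalIntegral.integral_add ((((wf_intervalIntegrable σ p q hp (by linarith)).const_mul (p+1))).sub
        ((wf_intervalIntegrable σ (p+1) (q-1) (by linarith) (by linarith)).const_mul q))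
        ((wf_intervalIntegrable σ (p+1) q (by linarith) (by linarith)).const_mul (2*σ)),
      intervalIntegral.integral_sub ((wf_intervalIntegrable σ p q hp (by linarith)).const_mul (p+1))
        ((wf_intervalIntegrable σ (p+1) (q-1) (by linarith) (by linarith)).const_mul q),
      intervalIntegral.integral_const_mul, intervalIntegral.integral_const_mul,
      intervalIntegral.integral_const_mul]
  rw [hsplit] at hFTC
  rw [interval_eq_Ioo, interval_eq_Ioo, interval_eq_Ioo] at hFTC
  linarith

lemma wf_reduce (σ p q : ℝ) (hp : -1 < p) (hq : -1 < q) :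
    ∫ x in Ioo (0:ℝ) 1, WF σ (p+1) q x
      = (∫ x in Ioo (0:ℝ) 1, WF σ p q x) - ∫ x in Ioo (0:ℝ) 1, WF σ p (q+1) x := by
  rw [← integral_sub (wf_integrableOn σ p q hp hq)
      (wf_integrableOn σ p (q+1) hp (by linarith))]
  apply setIntegral_congr_fun measurableSet_Ioo
  intro x hx
  have hx0 : x ≠ 0 := hx.1.ne'
  have hx1 : (1:ℝ) - x ≠ 0 := by have := hx.2; intro h; rw [sub_eq_zero] at h; linarith
  simp only [WF]
  rw [Real.rpow_add_one hx0, Real.rpow_add_one hx1]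
  ring

lemma wf_rec (σ p q : ℝ) (hp : -1 < p) (hq : 0 < q) :
    (p + 1 + q + 2*σ) * (∫ x in Ioo (0:ℝ) 1, WF σ p q x)
      = q * (∫ x in Ioo (0:ℝ) 1, WF σ p (q-1) x)
        + 2*σ * (∫ x in Ioo (0:ℝ) 1, WF σ p (q+1) x) := by
  have hibp := wf_ibp σ p q hp hq
  have hr1 := wf_reduce σ p q hp (by linarith)
  have hr2 := wf_reduce σ p (q-1) hp (by linarith)
  rw [sub_add_cancel] at hr2
  rw [hr1, hr2] at hibp
  linarith

lemma wf_pos (σ p q : ℝ) (hp : -1 < p) (hq : -1 < q) :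
    0 < ∫ x in Ioo (0:ℝ) 1, WF σ p q x := by
  rw [← interval_eq_Ioo]
  apply intervalIntegral.intervalIntegral_pos_of_pos_on (wf_intervalIntegrable σ p q hp hq)
  · intro x hx
    have h1 : (0:ℝ) < x := hx.1
    have h2 : (0:ℝ) < 1 - x := by have := hx.2; linarith
    simp only [WF]
    positivity
  · norm_num

theorem stmt_8 (σ ϑ ν₀ ν₁ : ℝ) (hσ : 0 ≤ σ) (hϑ : 0 < ϑ)
    (hν₀ : ν₀ ∈ Set.Ioo (0 : ℝ) 1) (hν₁ : ν₁ = 1 - ν₀)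
    (I : ℕ → ℝ)
    (hI : I = fun n : ℕ => ∫ x in Set.Ioo (0 : ℝ) 1,
      x ^ (2 * ϑ * ν₀ - 1) * (1 - x) ^ ((n : ℝ) + 2 * ϑ * ν₁ - 1)
        * Real.exp (2 * σ * x))
    (b : ℕ → ℝ) (hb : b = fun n => I n / I 0) :
    (∀ n : ℕ, 1 ≤ n →
      ((n : ℝ) - 1 + 2 * σ + 2 * ϑ) * I n
        = 2 * σ * I (n + 1) + ((n : ℝ) - 1 + 2 * ϑ * ν₁) * I (n - 1)) ∧
    b 0 = 1 ∧
    (∀ n : ℕ, 1 ≤ n →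
      b n = (2 * σ / ((n : ℝ) - 1 + 2 * σ + 2 * ϑ)) * b (n + 1)
        + (((n : ℝ) - 1 + 2 * ϑ * ν₁) / ((n : ℝ) - 1 + 2 * σ + 2 * ϑ)) * b (n - 1)) := by
  set p : ℝ := 2 * ϑ * ν₀ - 1 with hp_def
  have hp : -1 < p := by
    have : 0 < 2 * ϑ * ν₀ := by have := hν₀.1; positivity
    simp only [hp_def]; linarith
  have hν₁pos : 0 < ν₁ := by rw [hν₁]; have := hν₀.2; linarith
  have hIJ : ∀ n : ℕ, I n = ∫ x in Set.Ioo (0:ℝ) 1, WF σ p ((n:ℝ) + 2 * ϑ * ν₁ - 1) x := by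
    intro n; rw [hI]
    rfl
  have hexp_pos : ∀ n : ℕ, -1 < (n:ℝ) + 2 * ϑ * ν₁ - 1 := by
    intro n
    have h1 : 0 < 2 * ϑ * ν₁ := by positivity
    have h2 : (0:ℝ) ≤ n := Nat.cast_nonneg n
    linarith
  have hI0 : 0 < I 0 := by
    rw [hIJ 0]
    exact wf_pos σ p _ hp (hexp_pos 0)
  -- main recursion
  have hrec : ∀ n : ℕ, 1 ≤ n →
      ((n : ℝ) - 1 + 2 * σ + 2 * ϑ) * I n
        = 2 * σ * I (n + 1) + ((n : ℝ) - 1 + 2 * ϑ * ν₁) * I (n - 1) := by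
    intro n hn
    obtain ⟨m, rfl⟩ : ∃ m, n = m + 1 := ⟨n - 1, (Nat.succ_pred_eq_of_pos hn).symm⟩
    set q : ℝ := (m:ℝ) + 2 * ϑ * ν₁ with hq_def
    have hq : 0 < q := by
      have h1 : 0 < 2 * ϑ * ν₁ := by positivity
      have h2 : (0:ℝ) ≤ m := Nat.cast_nonneg m
      simp only [hq_def]; linarith
    have key := wf_rec σ p q hp hq
    have e1 : ((m + 1 : ℕ) : ℝ) + 2 * ϑ * ν₁ - 1 = q := by push_cast [hq_def]; ring
    have e2 : ((m + 1 + 1 : ℕ) : ℝ) + 2 * ϑ * ν₁ - 1 = q + 1 := by push_cast [hq_def]; ring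
    have e3 : ((m : ℕ) : ℝ) + 2 * ϑ * ν₁ - 1 = q - 1 := by push_cast [hq_def]; ring
    have hm : m + 1 - 1 = m := rfl
    rw [hIJ (m + 1), hIJ (m + 1 + 1), hm, hIJ m, e1, e2, e3]
    have ecoef : ((m + 1 : ℕ) : ℝ) - 1 + 2 * σ + 2 * ϑ = p + 1 + q + 2 * σ := by
      push_cast [hq_def, hp_def, hν₁]; ring
    have ecoef2 : ((m + 1 : ℕ) : ℝ) - 1 + 2 * ϑ * ν₁ = q := by push_cast [hq_def]; ring
    rw [ecoef, ecoef2]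
    linarith [key]
  refine ⟨hrec, ?_, ?_⟩
  · rw [hb]; exact div_self hI0.ne'
  · intro n hn
    have hD : (0:ℝ) < (n : ℝ) - 1 + 2 * σ + 2 * ϑ := by
      have : (1:ℝ) ≤ n := by exact_mod_cast hn
      linarith
    have h := hrec n hn
    rw [hb]
    simp only
    rw [div_mul_div_comm, div_mul_div_comm, ← add_div, ← h,
      mul_div_mul_left _ _ hD.ne']
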